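/- arXiv:1404.1440 — 3 statements merged into one kernel-verified Lean document; each statement's English description precedes it below -/
import Mathlib

section
/- For any two real symmetric m×m matrices A and B, the squared Frobenius norm of their commutator satisfies ‖[A,B]‖² ≤ 2‖A‖²·‖B‖². -/
open Matrix Finset

/-- Frobenius norm squared of a real matrix. -/
def frob2 {m : ℕ} (M : Matrix (Fin m) (Fin m) ℝ) : ℝ :=
  ∑ i, ∑ j, (M i j) ^ 2

lemma frob2_eq_trace {m : ℕ} (M : Matrix (Fin m) (Fin m) ℝ) :
    frob2 M = Matrix.trace (M * Mᵀ) := by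
  simp [frob2, Matrix.trace, Matrix.mul_apply, Matrix.diag, sq]

lemma frob2_conj {m : ℕ} (U M : Matrix (Fin m) (Fin m) ℝ)
    (h1 : Uᵀ * U = 1) (h2 : U * Uᵀ = 1) :
    frob2 (Uᵀ * M * U) = frob2 M := by
  rw [frob2_eq_trace, frob2_eq_trace]
  have hUU : ∀ X : Matrix (Fin m) (Fin m) ℝ, U * (Uᵀ * X) = X := fun X => by
    rw [← Matrix.mul_assoc, h2, Matrix.one_mul]
  have : (Uᵀ * M * U) * (Uᵀ * M * U)ᵀ = Uᵀ * (M * Mᵀ) * U := by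
    simp only [Matrix.transpose_mul, Matrix.transpose_transpose, Matrix.mul_assoc, hUU]
  rw [this, Matrix.trace_mul_cycle, ← Matrix.mul_assoc, h2, Matrix.one_mul]

lemma frob2_diag_comm {m : ℕ} (d : Fin m → ℝ) (B : Matrix (Fin m) (Fin m) ℝ) :
    frob2 (Matrix.diagonal d * B - B * Matrix.diagonal d)
      ≤ 2 * (∑ i, d i ^ 2) * frob2 B := by
  classical
  have hS : ∀ i j : Fin m, (d i - d j) ^ 2 ≤ 2 * ∑ k, d k ^ 2 := by
    intro i j
    have hnonneg : (0:ℝ) ≤ ∑ k, d k ^ 2 :=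
      Finset.sum_nonneg fun k _ => sq_nonneg _
    by_cases h : i = j
    · subst h; simpa using by positivity
    · have hsub : d i ^ 2 + d j ^ 2 ≤ ∑ k, d k ^ 2 := by
        have := Finset.sum_le_sum_of_subset_of_nonneg
          (Finset.subset_univ ({i, j} : Finset (Fin m)))
          (fun k _ _ => sq_nonneg (d k))
        rwa [Finset.sum_pair h] at this
      nlinarith [sq_nonneg (d i + d j)]
  have : frob2 (Matrix.diagonal d * B - B * Matrix.diagonal d)
      = ∑ i, ∑ j, (d i - d j) ^ 2 * (B i j) ^ 2 := by
    unfold frob2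
    refine Finset.sum_congr rfl fun i _ => Finset.sum_congr rfl fun j _ => ?_
    rw [Matrix.sub_apply, Matrix.diagonal_mul, Matrix.mul_diagonal]
    ring
  rw [this]
  have hrhs : 2 * (∑ i, d i ^ 2) * frob2 B
      = ∑ i, ∑ j, (2 * ∑ k, d k ^ 2) * (B i j) ^ 2 := by
    unfold frob2
    rw [Finset.mul_sum]
    refine Finset.sum_congr rfl fun i _ => ?_
    rw [Finset.mul_sum]
  rw [hrhs]
  refine Finset.sum_le_sum fun i _ => Finset.sum_le_sum fun j _ => ?_
  exact mul_le_mul_of_nonneg_right (hS i j) (sq_nonneg _)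

/-- For real symmetric matrices, ‖[A,B]‖² ≤ 2‖A‖²‖B‖² (Frobenius norm). -/
theorem commutator_frob_le {m : ℕ} (A B : Matrix (Fin m) (Fin m) ℝ)
    (hA : A.IsSymm) (hB : B.IsSymm) :
    frob2 (A * B - B * A) ≤ 2 * frob2 A * frob2 B := by
  classical
  have hAh : A.IsHermitian := by
    rwa [Matrix.IsHermitian, Matrix.conjTranspose_eq_transpose_of_trivial]
  set U : Matrix (Fin m) (Fin m) ℝ := (hAh.eigenvectorUnitary : Matrix (Fin m) (Fin m) ℝ) with hU
  have hUmem := hAh.eigenvectorUnitary.2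
  have h1 : Uᵀ * U = 1 := by
    have := (Matrix.mem_unitaryGroup_iff'.mp hUmem)
    rwa [Matrix.star_eq_conjTranspose, Matrix.conjTranspose_eq_transpose_of_trivial] at this
  have h2 : U * Uᵀ = 1 := by
    have := (Matrix.mem_unitaryGroup_iff.mp hUmem)
    rwa [Matrix.star_eq_conjTranspose, Matrix.conjTranspose_eq_transpose_of_trivial] at this
  set d : Fin m → ℝ := hAh.eigenvalues with hd
  have hspec : Uᵀ * A * U = Matrix.diagonal d := by
    have : (star (hAh.eigenvectorUnitary : Matrix (Fin m) (Fin m) ℝ)) * A * (hAh.eigenvectorUnitary : Matrix (Fin m) (Fin m) ℝ) = Matrix.diagonal (RCLike.ofReal ∘ hAh.eigenvalues) := by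
      simpa using hAh.conjStarAlgAut_star_eigenvectorUnitary
    rw [Matrix.star_eq_conjTranspose, Matrix.conjTranspose_eq_transpose_of_trivial] at this
    simpa [hd] using this
  set B' : Matrix (Fin m) (Fin m) ℝ := Uᵀ * B * U with hB'
  have hcomm : Uᵀ * (A * B - B * A) * U
      = Matrix.diagonal d * B' - B' * Matrix.diagonal d := by
    rw [← hspec, hB']
    have hUU : ∀ X : Matrix (Fin m) (Fin m) ℝ, U * (Uᵀ * X) = X := fun X => by
      rw [← Matrix.mul_assoc, h2, Matrix.one_mul]
    simp only [Matrix.mul_sub, Matrix.sub_mul, Matrix.mul_assoc, hUU]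
  have key := frob2_diag_comm d B'
  have e1 : frob2 (A * B - B * A) = frob2 (Matrix.diagonal d * B' - B' * Matrix.diagonal d) := by
    rw [← hcomm, frob2_conj _ _ h1 h2]
  have e2 : frob2 B' = frob2 B := frob2_conj _ _ h1 h2
  have e3 : frob2 A = ∑ i, d i ^ 2 := by
    have : frob2 A = frob2 (Matrix.diagonal d) := by
      rw [← hspec, frob2_conj _ _ h1 h2]
    rw [this]
    unfold frob2
    refine Finset.sum_congr rfl fun i _ => ?_
    rw [Finset.sum_eq_single i]
    · simp
    · intro j _ hj
      simp [Matrix.diagonal_apply, Ne.symm hj]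
    · simp
  rw [e1, e3]
  calc frob2 (Matrix.diagonal d * B' - B' * Matrix.diagonal d)
      ≤ 2 * (∑ i, d i ^ 2) * frob2 B' := key
    _ = 2 * (∑ i, d i ^ 2) * frob2 B := by rw [e2]
end

section
/- Let m ≥ 2, and let A₁ = λ₁I + μ₀(E₁₂+E₂₁), A₂ = λ₂I + μ₀(E₁₁−E₂₂), A₃ = λ₃I, A₄ = … = A_p = 0 be m×m matrices. Let Bᵣ = Aᵣ − (trace(Aᵣ)/m)I denote their traceless parts. Then (Σᵣ ‖Bᵣ‖²)² = 2 Σ_{r<s} ‖[Bᵣ,Bₛ]‖² = 16μ₀⁴; i.e., shape operators in the Wintgen canonical form attain equality in the matrix DDVV inequality. -/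
open Matrix Finset

def i0 (m : ℕ) (hm : 2 ≤ m) : Fin m := ⟨0, by omega⟩
def i1 (m : ℕ) (hm : 2 ≤ m) : Fin m := ⟨1, by omega⟩

lemma frob2_zero {m : ℕ} : frob2 (0 : Matrix (Fin m) (Fin m) ℝ) = 0 := by
  simp [frob2]

lemma frob2_pair {m : ℕ} (a b : ℝ) (i j k l : Fin m) (h : ¬(i = k ∧ j = l)) :
    frob2 (a • Matrix.single i j (1:ℝ) + b • Matrix.single k l (1:ℝ)) = a^2 + b^2 := by
  unfold frob2
  have key : ∀ x y : Fin m,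
      ((a • Matrix.single i j (1:ℝ) + b • Matrix.single k l (1:ℝ)) x y)^2
        = (if i = x then (if j = y then a^2 else 0) else 0)
          + (if k = x then (if l = y then b^2 else 0) else 0) := by
    intro x y
    by_cases h1 : i = x ∧ j = y
    · obtain ⟨rfl, rfl⟩ := h1
      have h2 : ¬(k = i ∧ l = j) := fun ⟨hk, hl⟩ => h ⟨hk.symm, hl.symm⟩
      simp [Matrix.add_apply, Matrix.smul_apply, h2]
      by_cases hk : k = i <;> by_cases hl : l = j <;> simp_all
    · by_cases h2 : k = x ∧ l = y
      · obtain ⟨rfl, rfl⟩ := h2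
        simp [Matrix.add_apply, Matrix.smul_apply, h1]
        by_cases hk : i = k <;> by_cases hl : j = l <;> simp_all
      · simp [Matrix.add_apply, Matrix.smul_apply, h1, h2]
        by_cases hk : i = x <;> by_cases hl : j = y <;>
          by_cases hk' : k = x <;> by_cases hl' : l = y <;> simp_all
  simp_rw [key, Finset.sum_add_distrib]
  simp

/-- Shape operators in the Wintgen canonical form attain equality in the
matrix DDVV inequality: with Bᵣ the traceless part of Aᵣ,
(Σᵣ ‖Bᵣ‖²)² = 2 Σ_{r<s} ‖[Bᵣ,Bₛ]‖² = 16μ₀⁴. -/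
theorem wintgen_ddvv_equality (m p : ℕ) (hm : 2 ≤ m) (hp : 3 ≤ p)
    (lam1 lam2 lam3 mu0 : ℝ) (A : Fin p → Matrix (Fin m) (Fin m) ℝ)
    (hA1 : A ⟨0, by omega⟩ = lam1 • (1 : Matrix (Fin m) (Fin m) ℝ)
              + mu0 • (Matrix.single (i0 m hm) (i1 m hm) 1
                       + Matrix.single (i1 m hm) (i0 m hm) 1))
    (hA2 : A ⟨1, by omega⟩ = lam2 • (1 : Matrix (Fin m) (Fin m) ℝ)
              + mu0 • (Matrix.single (i0 m hm) (i0 m hm) 1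
                       - Matrix.single (i1 m hm) (i1 m hm) 1))
    (hA3 : A ⟨2, by omega⟩ = lam3 • (1 : Matrix (Fin m) (Fin m) ℝ))
    (hA : ∀ r : Fin p, 3 ≤ (r : ℕ) → A r = 0)
    (B : Fin p → Matrix (Fin m) (Fin m) ℝ)
    (hB : ∀ r, B r = A r - ((A r).trace / m) • (1 : Matrix (Fin m) (Fin m) ℝ)) :
    (∑ r, frob2 (B r)) ^ 2
        = 2 * ∑ r, ∑ s, (if r < s then frob2 (B r * B s - B s * B r) else 0) ∧
    (∑ r, frob2 (B r)) ^ 2 = 16 * mu0 ^ 4 := by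
  set e0 := i0 m hm with he0
  set e1 := i1 m hm with he1
  have hne : e0 ≠ e1 := by
    simp [he0, he1, i0, i1, Fin.ext_iff]
  have hne' : e1 ≠ e0 := hne.symm
  have hm0 : (m : ℝ) ≠ 0 := by positivity
  set r0 : Fin p := ⟨0, by omega⟩ with hr0
  set r1 : Fin p := ⟨1, by omega⟩ with hr1
  set r2 : Fin p := ⟨2, by omega⟩ with hr2
  set P := mu0 • Matrix.single e0 e1 (1:ℝ) + mu0 • Matrix.single e1 e0 (1:ℝ) with hP
  set Q := mu0 • Matrix.single e0 e0 (1:ℝ) + (-mu0) • Matrix.single e1 e1 (1:ℝ) with hQ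
  -- compute B values
  have htr1 : (A r0).trace = lam1 * m := by
    rw [hA1]
    simp [Matrix.trace_add, Matrix.trace_smul, Matrix.trace_one,
      Matrix.trace_single_eq_of_ne _ _ _ hne', Matrix.trace_single_eq_of_ne _ _ _ hne]
  have htr2 : (A r1).trace = lam2 * m := by
    rw [hA2]
    simp [Matrix.trace_add, Matrix.trace_sub, Matrix.trace_smul, Matrix.trace_one,
      Matrix.trace_single_eq_same]
  have htr3 : (A r2).trace = lam3 * m := by
    rw [hA3]
    simp [Matrix.trace_smul, Matrix.trace_one]
  have hB0 : B r0 = P := by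
    rw [hB, htr1, hA1, hP]
    rw [mul_div_assoc, div_self hm0, mul_one, smul_add]
    abel
  have hB1 : B r1 = Q := by
    rw [hB, htr2, hA2, hQ]
    rw [mul_div_assoc, div_self hm0, mul_one, smul_sub]
    simp only [neg_smul]
    abel
  have hBrest : ∀ r, r ≠ r0 → r ≠ r1 → B r = 0 := by
    intro r h0 h1
    by_cases h2 : r = r2
    · subst h2
      rw [hB, htr3, hA3, mul_div_assoc, div_self hm0, mul_one, sub_self]
    · have : 3 ≤ (r : ℕ) := by
        have := Fin.ext_iff.not.mp h0
        have := Fin.ext_iff.not.mp h1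
        have := Fin.ext_iff.not.mp h2
        simp only [hr0, hr1, hr2] at *
        omega
      rw [hB, hA r this]
      simp
  have h01 : r0 ≠ r1 := by simp [hr0, hr1, Fin.ext_iff]
  have hlt01 : r0 < r1 := by simp [hr0, hr1, Fin.lt_def]
  -- sum of frob2
  have hsum : (∑ r, frob2 (B r)) = 4 * mu0 ^ 2 := by
    rw [← Finset.sum_subset (Finset.subset_univ ({r0, r1} : Finset (Fin p)))]
    · rw [Finset.sum_pair h01, hB0, hB1, frob2_pair _ _ _ _ _ _ (by tauto),
        frob2_pair _ _ _ _ _ _ (by tauto)]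
      ring
    · intro r _ hr
      simp only [Finset.mem_insert, Finset.mem_singleton, not_or] at hr
      rw [hBrest r hr.1 hr.2, frob2_zero]
  -- commutator
  have hC : P * Q - Q * P = (2*mu0^2) • Matrix.single e1 e0 (1:ℝ)
      + (-(2*mu0^2)) • Matrix.single e0 e1 (1:ℝ) := by
    rw [hP, hQ]
    simp only [add_mul, mul_add, smul_mul_assoc, mul_smul_comm,
      Matrix.single_mul_single_same, Matrix.single_mul_single_of_ne _ _ _ _ hne,
      Matrix.single_mul_single_of_ne _ _ _ _ hne', mul_one, smul_zero, smul_smul]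
    simp only [neg_smul, smul_neg]
    abel_nf
    module
  have hCfrob : frob2 (P * Q - Q * P) = 8 * mu0 ^ 4 := by
    rw [hC, frob2_pair _ _ _ _ _ _ (by tauto)]
    ring
  -- the double sum
  have hdouble : (∑ r, ∑ s, (if r < s then frob2 (B r * B s - B s * B r) else 0))
      = 8 * mu0 ^ 4 := by
    have key : ∀ r s : Fin p, (if r < s then frob2 (B r * B s - B s * B r) else 0)
        = (if r = r0 then (if s = r1 then (8 : ℝ) * mu0 ^ 4 else 0) else 0) := by
      intro r s
      by_cases h0 : r = r0
      · subst h0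
        by_cases h1 : s = r1
        · subst h1
          rw [if_pos hlt01, hB0, hB1, hCfrob]
          simp
        · simp only [if_neg h1] at *
          by_cases hs0 : s = r0
          · subst hs0; simp
          · rw [hBrest s hs0 h1]
            simp [frob2_zero]
      · rw [if_neg h0]
        by_cases h1 : r = r1
        · subst h1
          by_cases hs0 : s = r0
          · subst hs0
            rw [if_neg (by exact fun h => absurd (lt_trans hlt01 h) (lt_irrefl _))]
          · by_cases hs1 : s = r1
            · subst hs1; simp
            · rw [hBrest s hs0 hs1]
              simp [frob2_zero]
        · rw [hBrest r h0 h1]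
          simp [frob2_zero, zero_mul, mul_zero, sub_zero, ite_self]
    simp only [key]
    simp
  constructor
  · rw [hsum, hdouble]; ring
  · rw [hsum]; ring
end

section
/- Let m ≥ 2, c ∈ ℝ, and let A₁ = λ₁I + μ₀(E₁₂+E₂₁), A₂ = λ₂I + μ₀(E₁₁−E₂₂), A₃ = λ₃I be m×m shape operators. Define the normalized scalar curvature K := c + (2/(m(m−1))) Σᵣ Σ_{i<j} ((Aᵣ)ᵢᵢ(Aᵣ)ⱼⱼ − (Aᵣ)ᵢⱼ²), the squared mean curvature ‖H‖² := λ₁² + λ₂² + λ₃², and the normal scalar curvature K_N := (2/(m(m−1))) · √(Σ_{i<j} Σ_{r<s} ([Aᵣ,Aₛ]ᵢⱼ)²). Then K = c + ‖H‖² − K_N; i.e., the DDVV equality holds pointwise. -/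
open Matrix Finset

/-- Gauss-equation contribution of a single shape operator:
Σ_{i<j} (Aᵢᵢ Aⱼⱼ − Aᵢⱼ²). -/
def gaussContrib {m : ℕ} (A : Matrix (Fin m) (Fin m) ℝ) : ℝ :=
  ∑ i, ∑ j, (if i < j then A i i * A j j - (A i j) ^ 2 else 0)

lemma stdB_apply {m : ℕ} (a b i j : Fin m) (x : ℝ) :
    Matrix.single a b x i j = if i = a ∧ j = b then x else 0 := by
  by_cases h : i = a ∧ j = b
  · obtain ⟨rfl, rfl⟩ := h; simp
  · rw [if_neg h]
    exact Matrix.single_apply_of_ne (c := x) (h := fun hh => h ⟨hh.1.symm, hh.2.symm⟩)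

lemma pair_sum {m : ℕ} (d : Fin m → ℝ) :
    ∑ i, ∑ j, (if i < j then d i * d j else 0)
      = ((∑ i, d i) ^ 2 - ∑ i, d i ^ 2) / 2 := by
  have hsq : (∑ i, d i) ^ 2 = ∑ i : Fin m, ∑ j : Fin m, d i * d j := by
    rw [sq, Finset.sum_mul_sum]
  have tri : ∀ i j : Fin m, d i * d j =
      (if i < j then d i * d j else 0) + (if i = j then d i * d j else 0)
        + (if j < i then d i * d j else 0) := by
    intro i j
    rcases lt_trichotomy i j with h | h | h
    · simp [h, h.ne, not_lt.2 h.le]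
    · simp [h, lt_irrefl]
    · simp [h, h.ne', not_lt.2 h.le]
  have hsplit : ∑ i : Fin m, ∑ j : Fin m, d i * d j =
      (∑ i, ∑ j, (if i < j then d i * d j else 0))
      + (∑ i, ∑ j, (if i = j then d i * d j else 0))
      + (∑ i, ∑ j, (if j < i then d i * d j else 0)) := by
    rw [← Finset.sum_add_distrib, ← Finset.sum_add_distrib]
    refine Finset.sum_congr rfl fun i _ => ?_
    rw [← Finset.sum_add_distrib, ← Finset.sum_add_distrib]
    exact Finset.sum_congr rfl fun j _ => tri i j
  have hdiag : (∑ i : Fin m, ∑ j, (if i = j then d i * d j else 0)) = ∑ i, d i ^ 2 := by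
    refine Finset.sum_congr rfl fun i _ => ?_
    simp [Finset.sum_ite_eq, sq]
  have hsym : (∑ i : Fin m, ∑ j, (if j < i then d i * d j else 0))
      = ∑ i : Fin m, ∑ j, (if i < j then d i * d j else 0) := by
    rw [Finset.sum_comm]
    refine Finset.sum_congr rfl fun i _ => Finset.sum_congr rfl fun j _ => ?_
    rw [mul_comm]
  rw [hdiag, hsym] at hsplit
  rw [hsq] at *
  linarith [hsplit]

lemma sum_pair_ite {m : ℕ} (a b : Fin m) (hab : a < b) (x : ℝ) :
    ∑ i : Fin m, ∑ j : Fin m,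
      (if i < j then (if i = a ∧ j = b then x else 0) else 0) = x := by
  have h : ∀ i j : Fin m,
      (if i < j then (if i = a ∧ j = b then x else 0) else 0)
        = if i = a then (if j = b then x else 0) else 0 := by
    intro i j
    by_cases hi : i = a <;> by_cases hj : j = b
    · subst hi; subst hj; simp [hab]
    · simp [hi, hj]
    · simp [hi, hj]
    · simp [hi, hj]
  simp only [h]
  simp [Finset.sum_ite_eq']

/-- For shape operators in the Wintgen canonical form, the DDVV equality
K = c + ‖H‖² − K_N holds pointwise. -/
theorem wintgen_ddvv_pointwise_equality (m : ℕ) (hm : 2 ≤ m) (c : ℝ)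
    (lam1 lam2 lam3 mu0 : ℝ) (A1 A2 A3 : Matrix (Fin m) (Fin m) ℝ)
    (hA1 : A1 = lam1 • (1 : Matrix (Fin m) (Fin m) ℝ)
              + mu0 • (Matrix.single (i0 m hm) (i1 m hm) 1
                       + Matrix.single (i1 m hm) (i0 m hm) 1))
    (hA2 : A2 = lam2 • (1 : Matrix (Fin m) (Fin m) ℝ)
              + mu0 • (Matrix.single (i0 m hm) (i0 m hm) 1
                       - Matrix.single (i1 m hm) (i1 m hm) 1))
    (hA3 : A3 = lam3 • (1 : Matrix (Fin m) (Fin m) ℝ))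
    (K H2 KN : ℝ)
    (hK : K = c + 2 / ((m : ℝ) * ((m : ℝ) - 1))
                * (gaussContrib A1 + gaussContrib A2 + gaussContrib A3))
    (hH2 : H2 = lam1 ^ 2 + lam2 ^ 2 + lam3 ^ 2)
    (hKN : KN = 2 / ((m : ℝ) * ((m : ℝ) - 1))
              * Real.sqrt (∑ i, ∑ j, (if i < j then
                  ((A1 * A2 - A2 * A1) i j) ^ 2
                  + ((A1 * A3 - A3 * A1) i j) ^ 2
                  + ((A2 * A3 - A3 * A2) i j) ^ 2 else 0))) :
    K = c + H2 - KN := by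
  have hab' : i0 m hm < i1 m hm := by
    simp [i0, i1, Fin.lt_def]
  have hab : i0 m hm ≠ i1 m hm := ne_of_lt hab'
  generalize hga : i0 m hm = a at hA1 hA2 hab hab'
  generalize hgb : i1 m hm = b at hA1 hA2 hab hab'
  clear hga hgb
  -- entry descriptions
  have e1 : ∀ i j : Fin m, A1 i j = lam1 * (if i = j then 1 else 0)
      + mu0 * ((if i = a ∧ j = b then 1 else 0) + (if i = b ∧ j = a then 1 else 0)) := by
    intro i j
    rw [hA1]
    simp only [Matrix.add_apply, Matrix.smul_apply, Matrix.one_apply, stdB_apply, smul_eq_mul]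
  have e2 : ∀ i j : Fin m, A2 i j = lam2 * (if i = j then 1 else 0)
      + mu0 * ((if i = a ∧ j = a then 1 else 0) - (if i = b ∧ j = b then 1 else 0)) := by
    intro i j
    rw [hA2]
    simp only [Matrix.add_apply, Matrix.sub_apply, Matrix.smul_apply, Matrix.one_apply,
      stdB_apply, smul_eq_mul]
  -- gaussContrib splits
  have gsplit : ∀ A : Matrix (Fin m) (Fin m) ℝ, gaussContrib A =
      (∑ i, ∑ j, (if i < j then A i i * A j j else 0))
      - (∑ i, ∑ j, (if i < j then (A i j) ^ 2 else 0)) := by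
    intro A
    unfold gaussContrib
    rw [← Finset.sum_sub_distrib]
    refine Finset.sum_congr rfl fun i _ => ?_
    rw [← Finset.sum_sub_distrib]
    refine Finset.sum_congr rfl fun j _ => ?_
    split_ifs <;> simp
  -- diagonal entries
  have hA1diag : ∀ i, A1 i i = lam1 := by
    intro i
    rw [e1 i i]
    rw [if_pos rfl, if_neg (fun h : i = a ∧ i = b => hab (h.1.symm.trans h.2)),
      if_neg (fun h : i = b ∧ i = a => hab (h.2.symm.trans h.1))]
    ring
  have hA3diag : ∀ i, A3 i i = lam3 := by
    intro i; rw [hA3]; simp [Matrix.one_apply]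
  have hA2diag : ∀ i, A2 i i
      = lam2 + (if i = a then mu0 else 0) - (if i = b then mu0 else 0) := by
    intro i
    rw [e2 i i, if_pos rfl]
    by_cases hia : i = a
    · rw [if_pos ⟨hia, hia⟩, if_neg (fun h : i = b ∧ i = b => hab (hia.symm.trans h.1)),
        if_pos hia, if_neg (hia ▸ hab)]
      ring
    · rw [if_neg (fun h : i = a ∧ i = a => hia h.1), if_neg hia]
      by_cases hib : i = b
      · rw [if_pos ⟨hib, hib⟩, if_pos hib]; ring
      · rw [if_neg (fun h : i = b ∧ i = b => hib h.1), if_neg hib]; ring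
  -- off-diagonal squared sums
  have hoff1 : (∑ i, ∑ j, (if i < j then (A1 i j) ^ 2 else 0)) = mu0 ^ 2 := by
    have h : ∀ i j : Fin m, (if i < j then (A1 i j) ^ 2 else 0)
        = if i < j then (if i = a ∧ j = b then mu0 ^ 2 else 0) else 0 := by
      intro i j
      by_cases hij : i < j
      · rw [if_pos hij, if_pos hij, e1 i j, if_neg hij.ne,
          if_neg (fun h : i = b ∧ j = a => absurd (h.1 ▸ h.2 ▸ hab') hij.asymm)]
        by_cases h' : i = a ∧ j = b
        · rw [if_pos h', if_pos h']; ring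
        · rw [if_neg h', if_neg h']; ring
      · rw [if_neg hij, if_neg hij]
    simp only [h]
    exact sum_pair_ite a b hab' _
  have hA2off : ∀ i j : Fin m, i ≠ j → A2 i j = 0 := by
    intro i j hij
    rw [e2 i j, if_neg hij, if_neg (fun h : i = a ∧ j = a => hij (h.1.trans h.2.symm)),
      if_neg (fun h : i = b ∧ j = b => hij (h.1.trans h.2.symm))]
    ring
  have hoff2 : (∑ i, ∑ j, (if i < j then (A2 i j) ^ 2 else 0)) = 0 := by
    refine Finset.sum_eq_zero fun i _ => Finset.sum_eq_zero fun j _ => ?_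
    by_cases hij : i < j
    · rw [if_pos hij, hA2off i j hij.ne]; ring
    · rw [if_neg hij]
  have hoff3 : (∑ i, ∑ j, (if i < j then (A3 i j) ^ 2 else 0)) = 0 := by
    refine Finset.sum_eq_zero fun i _ => Finset.sum_eq_zero fun j _ => ?_
    by_cases hij : i < j
    · rw [if_pos hij, hA3]; simp [Matrix.one_apply, hij.ne]
    · rw [if_neg hij]
  -- gaussContrib values
  have hg1 : gaussContrib A1 = (((m:ℝ) * lam1) ^ 2 - (m:ℝ) * lam1 ^ 2) / 2 - mu0 ^ 2 := by
    rw [gsplit, hoff1]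
    congr 1
    have : (∑ i : Fin m, ∑ j, (if i < j then A1 i i * A1 j j else 0))
        = ∑ i : Fin m, ∑ j, (if i < j then (fun _ : Fin m => lam1) i * (fun _ => lam1) j else 0) := by
      refine Finset.sum_congr rfl fun i _ => Finset.sum_congr rfl fun j _ => ?_
      rw [hA1diag, hA1diag]
    rw [this, pair_sum (fun _ => lam1)]
    simp [Finset.card_univ]
    try ring
  have hg3 : gaussContrib A3 = (((m:ℝ) * lam3) ^ 2 - (m:ℝ) * lam3 ^ 2) / 2 := by
    rw [gsplit, hoff3, sub_zero]
    have : (∑ i : Fin m, ∑ j, (if i < j then A3 i i * A3 j j else 0))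
        = ∑ i : Fin m, ∑ j, (if i < j then (fun _ : Fin m => lam3) i * (fun _ => lam3) j else 0) := by
      refine Finset.sum_congr rfl fun i _ => Finset.sum_congr rfl fun j _ => ?_
      rw [hA3diag, hA3diag]
    rw [this, pair_sum (fun _ => lam3)]
    simp [Finset.card_univ]
    try ring
  have hg2 : gaussContrib A2 = (((m:ℝ) * lam2) ^ 2 - (m:ℝ) * lam2 ^ 2) / 2 - mu0 ^ 2 := by
    rw [gsplit, hoff2, sub_zero]
    have hd : (∑ i : Fin m, ∑ j, (if i < j then A2 i i * A2 j j else 0))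
        = ∑ i : Fin m, ∑ j, (if i < j then
            (fun i => lam2 + (if i = a then mu0 else 0) - (if i = b then mu0 else 0)) i
            * (fun i => lam2 + (if i = a then mu0 else 0) - (if i = b then mu0 else 0)) j else 0) := by
      refine Finset.sum_congr rfl fun i _ => Finset.sum_congr rfl fun j _ => ?_
      rw [hA2diag, hA2diag]
    rw [hd, pair_sum]
    have hS : (∑ i : Fin m, (lam2 + (if i = a then mu0 else 0) - (if i = b then mu0 else 0)))
        = (m:ℝ) * lam2 := by
      rw [Finset.sum_sub_distrib, Finset.sum_add_distrib]
      simp [Finset.sum_ite_eq', Finset.card_univ, mul_comm]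
    have hQ : (∑ i : Fin m, (lam2 + (if i = a then mu0 else 0) - (if i = b then mu0 else 0)) ^ 2)
        = (m:ℝ) * lam2 ^ 2 + 2 * mu0 ^ 2 := by
      have h : ∀ i : Fin m, (lam2 + (if i = a then mu0 else 0) - (if i = b then mu0 else 0)) ^ 2
          = lam2 ^ 2 + (if i = a then 2 * lam2 * mu0 + mu0 ^ 2 else 0)
            + (if i = b then -(2 * lam2 * mu0) + mu0 ^ 2 else 0) := by
        intro i
        by_cases hia : i = a
        · rw [if_pos hia, if_pos hia, if_neg (hia ▸ hab), if_neg (hia ▸ hab)]; ring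
        · rw [if_neg hia, if_neg hia]
          by_cases hib : i = b
          · rw [if_pos hib, if_pos hib]; ring
          · rw [if_neg hib, if_neg hib]; ring
      simp only [h]
      rw [Finset.sum_add_distrib, Finset.sum_add_distrib]
      simp [Finset.sum_ite_eq', Finset.card_univ, mul_comm]
      ring
    rw [hS, hQ]
    ring
  -- commutators
  have hC13 : A1 * A3 - A3 * A1 = 0 := by
    rw [hA3, Matrix.mul_smul, Matrix.smul_mul, mul_one, one_mul, sub_self]
  have hC23 : A2 * A3 - A3 * A2 = 0 := by
    rw [hA3, Matrix.mul_smul, Matrix.smul_mul, mul_one, one_mul, sub_self]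
  have key : ∀ (x y : ℝ) (P Q : Matrix (Fin m) (Fin m) ℝ),
      (x • 1 + mu0 • P) * (y • 1 + mu0 • Q) - (y • 1 + mu0 • Q) * (x • 1 + mu0 • P)
        = (mu0 * mu0) • (P * Q - Q * P) := by
    intro x y P Q
    simp only [add_mul, mul_add, smul_mul_assoc, mul_smul_comm, smul_smul, mul_one, one_mul]
    module
  have hPQ : (Matrix.single a b (1:ℝ) + Matrix.single b a 1)
      * (Matrix.single a a 1 - Matrix.single b b 1)
      = Matrix.single b a 1 - Matrix.single a b 1 := by
    rw [add_mul, mul_sub, mul_sub,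
      Matrix.single_mul_single_same, Matrix.single_mul_single_same,
      Matrix.single_mul_single_of_ne (h := Ne.symm hab), Matrix.single_mul_single_of_ne (h := hab)]
    rw [mul_one]
    abel
  have hQP : (Matrix.single a a (1:ℝ) - Matrix.single b b 1)
      * (Matrix.single a b 1 + Matrix.single b a 1)
      = Matrix.single a b 1 - Matrix.single b a 1 := by
    rw [sub_mul, mul_add, mul_add,
      Matrix.single_mul_single_same, Matrix.single_mul_single_same,
      Matrix.single_mul_single_of_ne (h := Ne.symm hab), Matrix.single_mul_single_of_ne (h := hab)]
    rw [mul_one]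
    abel
  have hC12 : A1 * A2 - A2 * A1
      = (2 * mu0 ^ 2) • (Matrix.single b a (1:ℝ) - Matrix.single a b 1) := by
    rw [hA1, hA2, key, hPQ, hQP]
    rw [show (Matrix.single b a (1:ℝ) - Matrix.single a b 1)
        - (Matrix.single a b 1 - Matrix.single b a 1)
        = (2:ℝ) • (Matrix.single b a (1:ℝ) - Matrix.single a b 1) from by
      rw [two_smul]; abel]
    rw [smul_smul]
    ring_nf
  -- the sqrt argument
  have hsum : (∑ i, ∑ j, (if i < j then
        ((A1 * A2 - A2 * A1) i j) ^ 2
        + ((A1 * A3 - A3 * A1) i j) ^ 2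
        + ((A2 * A3 - A3 * A2) i j) ^ 2 else 0)) = (2 * mu0 ^ 2) ^ 2 := by
    have h : ∀ i j : Fin m, (if i < j then
        ((A1 * A2 - A2 * A1) i j) ^ 2
        + ((A1 * A3 - A3 * A1) i j) ^ 2
        + ((A2 * A3 - A3 * A2) i j) ^ 2 else 0)
        = if i < j then (if i = a ∧ j = b then (2 * mu0 ^ 2) ^ 2 else 0) else 0 := by
      intro i j
      by_cases hij : i < j
      · rw [if_pos hij, if_pos hij, hC12, hC13, hC23]
        simp only [Matrix.zero_apply, Matrix.smul_apply, Matrix.sub_apply, stdB_apply,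
          smul_eq_mul]
        rw [if_neg (fun h : i = b ∧ j = a => absurd (h.1 ▸ h.2 ▸ hab') hij.asymm)]
        by_cases h' : i = a ∧ j = b
        · rw [if_pos h', if_pos h']; ring
        · rw [if_neg h', if_neg h']; ring
      · rw [if_neg hij, if_neg hij]
    simp only [h]
    exact sum_pair_ite a b hab' _
  have hsqrt : Real.sqrt (∑ i, ∑ j, (if i < j then
        ((A1 * A2 - A2 * A1) i j) ^ 2
        + ((A1 * A3 - A3 * A1) i j) ^ 2
        + ((A2 * A3 - A3 * A2) i j) ^ 2 else 0)) = 2 * mu0 ^ 2 := by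
    rw [hsum, Real.sqrt_sq (by positivity)]
  -- final arithmetic
  rw [hK, hKN, hH2, hsqrt, hg1, hg2, hg3]
  have hm2 : (2:ℝ) ≤ (m:ℝ) := by exact_mod_cast hm
  have h0 : (m:ℝ) * ((m:ℝ) - 1) ≠ 0 := by nlinarith
  have h1 : (m:ℝ) - 1 ≠ 0 := by linarith
  field_simp
  ring
end
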